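/- Transport formula for the surrogate-endpoint model of Figure 2(c) (equation 35): Suppose (i) for every x, y, z, s with μ_x({Z = z} ∩ {S = s}) > 0, μ_x({Y = y} | {Z = z} ∩ {S = s}) = μ_x({Y = y} | {Z = z}) (S-admissibility of Z), and (ii) there is a probability measure ν on 𝒳 × 𝒵 (the target observational distribution of (X, Z)) such that μ_x({Z = z} | {S = s*}) = ν({Z = z} | {X = x}) for all x, z (trivial transportability of P*(z | do(x)), valid because X and Z are unconfounded so that P*(z | do(x)) = P*(z | x)). Then for every x and y, μ_x({Y = y} | {S = s*}) = Σ_{z : 𝒵} μ_x({Y = y} | {Z = z}) · ν({Z = z} | {X = x}). -/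

import Mathlib

open MeasureTheory

/-- Conditional probability: `μ(A | B) = μ(A ∩ B) / μ(B)`. -/
noncomputable def pcond {Ω : Type*} [MeasurableSpace Ω] (μ : Measure Ω) (A B : Set Ω) :
    ENNReal := μ (A ∩ B) / μ B

/-- Transport formula for the surrogate-endpoint model of Figure 2(c), eq. (35):
if `Z` is S-admissible and `P*(z | do(x)) = ν(z | x)` (trivial transportability of
the effect of `X` on `Z`), then
`P*(y | do(x)) = ∑ z, P(y | do(x), z) · ν(z | x)`. -/
theorem surrogate_endpoint_transport_formula
    {𝒳 𝒴 𝒵 𝒮 : Type*}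
    [Fintype 𝒳] [Fintype 𝒴] [Fintype 𝒵] [Fintype 𝒮]
    [Nonempty 𝒳] [Nonempty 𝒴] [Nonempty 𝒵] [Nonempty 𝒮]
    [MeasurableSpace 𝒳] [DiscreteMeasurableSpace 𝒳]
    [MeasurableSpace 𝒴] [DiscreteMeasurableSpace 𝒴]
    [MeasurableSpace 𝒵] [DiscreteMeasurableSpace 𝒵]
    [MeasurableSpace 𝒮] [DiscreteMeasurableSpace 𝒮]
    (μ : 𝒳 → Measure (𝒴 × 𝒵 × 𝒮))
    (hprob : ∀ x, IsProbabilityMeasure (μ x))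
    (ν : Measure (𝒳 × 𝒵)) (hν : IsProbabilityMeasure ν)
    (s' : 𝒮)
    -- positive probability of all conditioning events appearing in the statement
    (hposS : ∀ x, 0 < μ x {p | p.2.2 = s'})
    (hposZ : ∀ x (z : 𝒵), 0 < μ x {p | p.2.1 = z})
    (hposX : ∀ x : 𝒳, 0 < ν {q | q.1 = x})
    -- (i) S-admissibility of Z : (Y ⫫ S | Z) under every μ x
    (hadm : ∀ x y z s, 0 < μ x ({p | p.2.1 = z} ∩ {p | p.2.2 = s}) →
      pcond (μ x) {p | p.1 = y} ({p | p.2.1 = z} ∩ {p | p.2.2 = s})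
        = pcond (μ x) {p | p.1 = y} {p | p.2.1 = z})
    -- (ii) trivial transportability of P*(z | do(x)) : P*(z | do(x)) = ν(z | x)
    (htriv : ∀ x z,
      pcond (μ x) {p | p.2.1 = z} {p | p.2.2 = s'}
        = pcond ν {q | q.2 = z} {q | q.1 = x}) :
    ∀ x y,
      pcond (μ x) {p | p.1 = y} {p | p.2.2 = s'}
        = ∑ z : 𝒵, pcond (μ x) {p | p.1 = y} {p | p.2.1 = z}
            * pcond ν {q | q.2 = z} {q | q.1 = x} := by

  intro x y
  classical
  have hdecomp : μ x ({p | p.1 = y} ∩ {p | p.2.2 = s'})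
      = ∑ z : 𝒵, μ x ({p | p.1 = y} ∩ ({p | p.2.1 = z} ∩ {p | p.2.2 = s'})) := by
    have hU : ({p : 𝒴 × 𝒵 × 𝒮 | p.1 = y} ∩ {p | p.2.2 = s'})
        = ⋃ z : 𝒵, ({p | p.1 = y} ∩ ({p | p.2.1 = z} ∩ {p | p.2.2 = s'})) := by
      ext p
      simp only [Set.mem_iUnion, Set.mem_inter_iff, Set.mem_setOf_eq]
      tauto
    rw [hU, measure_iUnion, tsum_fintype]
    · intro z z' hzz'
      simp only [Function.onFun, Set.disjoint_left, Set.mem_inter_iff, Set.mem_setOf_eq]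
      rintro p ⟨-, hz, -⟩ ⟨-, hz', -⟩
      exact hzz' (hz ▸ hz')
    · intro z
      exact MeasurableSet.inter (by measurability) (by measurability)
  unfold pcond
  rw [hdecomp, div_eq_mul_inv, Finset.sum_mul]
  simp only [← div_eq_mul_inv]
  refine Finset.sum_congr rfl fun z _ => ?_
  by_cases hz : μ x ({p | p.2.1 = z} ∩ {p | p.2.2 = s'}) = 0
  · have h1 : μ x ({p | p.1 = y} ∩ ({p | p.2.1 = z} ∩ {p | p.2.2 = s'})) = 0 :=
      measure_mono_null Set.inter_subset_right hz
    have h2 : ν ({q | q.2 = z} ∩ {q | q.1 = x}) / ν {q | q.1 = x} = 0 := by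
      have := htriv x z
      unfold pcond at this
      rw [← this, hz, ENNReal.zero_div]
    rw [h1, h2, mul_zero, ENNReal.zero_div]
  · have hb0 : μ x ({p | p.2.1 = z} ∩ {p | p.2.2 = s'}) ≠ 0 := hz
    have hbt : μ x ({p | p.2.1 = z} ∩ {p | p.2.2 = s'}) ≠ ⊤ := measure_ne_top _ _
    have hpos : 0 < μ x ({p | p.2.1 = z} ∩ {p | p.2.2 = s'}) :=
      lt_of_le_of_ne zero_le' (Ne.symm hz)
    have key : μ x ({p | p.1 = y} ∩ ({p | p.2.1 = z} ∩ {p | p.2.2 = s'})) / μ x {p | p.2.2 = s'}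
        = pcond (μ x) {p | p.1 = y} ({p | p.2.1 = z} ∩ {p | p.2.2 = s'})
          * pcond (μ x) {p | p.2.1 = z} {p | p.2.2 = s'} := by
      unfold pcond
      rw [← mul_div_assoc, ENNReal.div_mul_cancel hb0 hbt]
    rw [key, hadm x y z s' hpos, htriv x z]
    rfl
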